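/- Let d, n ≥ 1 and suppose that for each ξ ∈ ℝ^d with ξ ≠ 0 one is given real n×n matrices A(ξ) symmetric, B(ξ) symmetric positive semidefinite, K(ξ) skew-symmetric, and a real number f(ξ) > 0 such that [K(ξ)A(ξ)]^s + B(ξ) ≥ f(ξ) I. Assume additionally that there is a constant C₀ > 0 such that for all ξ ≠ 0: |ξ| ‖K(ξ)‖ / (1+|ξ|²) ≤ C₀ and ‖K(ξ) B(ξ)^{1/2}‖ / ((1+|ξ|²)^{1/2} f(ξ)^{1/2}) ≤ C₀, where B(ξ)^{1/2} is the positive semidefinite square root of B(ξ). Then there exist constants C ≥ 1 and k > 0, depending only on n and C₀, such that for every ξ ≠ 0 and every differentiable function V : [0,∞) → ℂⁿ satisfying V′(t) = −(i|ξ|A(ξ) + B(ξ)) V(t) for all t ≥ 0, one has |V(t)| ≤ C exp( − k |ξ|² f(ξ) t / (1+|ξ|²) ) |V(0)| for all t ≥ 0. -/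

import Mathlib

open Matrix ComplexConjugate

set_option maxHeartbeats 1000000
set_option synthInstance.maxHeartbeats 200000

/-- The Euclidean norm of a vector in `ℝ^d`. -/
noncomputable def euclidNorm {d : ℕ} (ξ : Fin d → ℝ) : ℝ :=
  Real.sqrt (∑ i, ξ i ^ 2)

/-- The positive semidefinite square root of a positive semidefinite matrix
(removed from Mathlib; restored with its old definition). -/
noncomputable def Matrix.PosSemidef.sqrt {n 𝕜 : Type*} [Fintype n] [DecidableEq n] [RCLike 𝕜]
    [PartialOrder 𝕜] [StarOrderedRing 𝕜] {A : Matrix n n 𝕜} (hA : A.PosSemidef) : Matrix n n 𝕜 :=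
  hA.1.eigenvectorUnitary.1 * diagonal ((↑) ∘ (√·) ∘ hA.1.eigenvalues) *
  (star hA.1.eigenvectorUnitary : Matrix n n 𝕜)

/-- The operator norm of a real square matrix, induced by the Euclidean norm. -/
noncomputable def opNormR {n : ℕ} (M : Matrix (Fin n) (Fin n) ℝ) : ℝ :=
  ‖Matrix.toEuclideanCLM (𝕜 := ℝ) (n := Fin n) M‖

/-- The symmetric part `[M]ˢ = (1/2)(M + Mᵀ)` of a real square matrix. -/
noncomputable def symPart {n : ℕ} (M : Matrix (Fin n) (Fin n) ℝ) :
    Matrix (Fin n) (Fin n) ℝ :=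
  (1 / 2 : ℝ) • (M + Mᵀ)

/-! ### Auxiliary machinery -/

lemma psd_sqrt_psd {n : ℕ} {A : Matrix (Fin n) (Fin n) ℝ} (hA : A.PosSemidef) :
    hA.sqrt.PosSemidef := by
  unfold Matrix.PosSemidef.sqrt
  exact (PosSemidef.diagonal (d := ((RCLike.ofReal : ℝ → ℝ) ∘ (√·) ∘ hA.1.eigenvalues))
    (fun i => by simp [Real.sqrt_nonneg])).mul_mul_conjTranspose_same
    (hA.1.eigenvectorUnitary : Matrix (Fin n) (Fin n) ℝ)

lemma psd_sqrt_mul_self {n : ℕ} {A : Matrix (Fin n) (Fin n) ℝ} (hA : A.PosSemidef) :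
    hA.sqrt * hA.sqrt = A := by
  have hC : (star hA.1.eigenvectorUnitary : Matrix (Fin n) (Fin n) ℝ) *
      (hA.1.eigenvectorUnitary : Matrix (Fin n) (Fin n) ℝ) = 1 := Unitary.coe_star_mul_self _
  have hEE : diagonal (((RCLike.ofReal : ℝ → ℝ) ∘ (√·) ∘ hA.1.eigenvalues)) *
      diagonal (((RCLike.ofReal : ℝ → ℝ) ∘ (√·) ∘ hA.1.eigenvalues)) =
      diagonal (RCLike.ofReal ∘ hA.1.eigenvalues) := by
    rw [diagonal_mul_diagonal]; congr 1; funext i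
    simp [Real.mul_self_sqrt (hA.eigenvalues_nonneg i)]
  have hsp := hA.1.spectral_theorem
  rw [Unitary.conjStarAlgAut_apply] at hsp
  unfold Matrix.PosSemidef.sqrt
  conv_rhs => rw [hsp]
  calc _ = (hA.1.eigenvectorUnitary : Matrix (Fin n) (Fin n) ℝ) *
      (diagonal (((RCLike.ofReal : ℝ → ℝ) ∘ (√·) ∘ hA.1.eigenvalues)) *
      ((star hA.1.eigenvectorUnitary : Matrix (Fin n) (Fin n) ℝ) *
      (hA.1.eigenvectorUnitary : Matrix (Fin n) (Fin n) ℝ)) *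
      diagonal (((RCLike.ofReal : ℝ → ℝ) ∘ (√·) ∘ hA.1.eigenvalues))) *
      (star hA.1.eigenvectorUnitary : Matrix (Fin n) (Fin n) ℝ) := by
        simp only [Matrix.mul_assoc]
    _ = _ := by rw [hC, Matrix.mul_one, hEE]


/-- The complexification of a real matrix, as a continuous linear map on `ℂⁿ`. -/
noncomputable def cMat {n : ℕ} (M : Matrix (Fin n) (Fin n) ℝ) :
    EuclideanSpace ℂ (Fin n) →L[ℂ] EuclideanSpace ℂ (Fin n) :=
  Matrix.toEuclideanCLM (𝕜 := ℂ) (M.map Complex.ofReal)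

lemma auxMapR_mul {n : ℕ} (M N : Matrix (Fin n) (Fin n) ℝ) :
    (M * N).map Complex.ofReal = M.map Complex.ofReal * N.map Complex.ofReal := by
  ext i j
  simp [Matrix.mul_apply]

lemma cMat_map_mul {n : ℕ} (M N : Matrix (Fin n) (Fin n) ℝ) (v : EuclideanSpace ℂ (Fin n)) :
    cMat (M * N) v = cMat M (cMat N v) := by
  unfold cMat
  rw [auxMapR_mul, _root_.map_mul]
  rfl

lemma cMat_sub_apply {n : ℕ} (M N : Matrix (Fin n) (Fin n) ℝ) (v : EuclideanSpace ℂ (Fin n)) :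
    cMat (M - N) v = cMat M v - cMat N v := by
  unfold cMat
  have h : (M - N).map Complex.ofReal = M.map Complex.ofReal - N.map Complex.ofReal := by
    ext i j; simp
  rw [h, map_sub]
  rfl

lemma cMat_add_apply {n : ℕ} (M N : Matrix (Fin n) (Fin n) ℝ) (v : EuclideanSpace ℂ (Fin n)) :
    cMat (M + N) v = cMat M v + cMat N v := by
  unfold cMat
  have h : (M + N).map Complex.ofReal = M.map Complex.ofReal + N.map Complex.ofReal := by
    ext i j; simp
  rw [h, map_add]
  rfl

lemma cMat_smul_apply {n : ℕ} (r : ℝ) (M : Matrix (Fin n) (Fin n) ℝ)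
    (v : EuclideanSpace ℂ (Fin n)) :
    cMat (r • M) v = (r : ℂ) • cMat M v := by
  unfold cMat
  have h : (r • M).map Complex.ofReal = (r : ℂ) • (M.map Complex.ofReal) := by
    ext i j; simp
  rw [h, _root_.map_smul]
  rfl

lemma cMat_smul_one_apply {n : ℕ} (r : ℝ) (v : EuclideanSpace ℂ (Fin n)) :
    cMat (r • (1 : Matrix (Fin n) (Fin n) ℝ)) v = (r : ℂ) • v := by
  rw [cMat_smul_apply]
  unfold cMat
  have h : ((1 : Matrix (Fin n) (Fin n) ℝ)).map Complex.ofReal = 1 := by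
    ext i j; simp [Matrix.one_apply]; split <;> simp
  rw [h, _root_.map_one]
  rfl

lemma cMat_adjoint {n : ℕ} (M : Matrix (Fin n) (Fin n) ℝ) :
    ContinuousLinearMap.adjoint (cMat M) = cMat Mᵀ := by
  rw [← ContinuousLinearMap.star_eq_adjoint]
  unfold cMat
  rw [← map_star]
  congr 1
  ext i j
  simp [Matrix.star_eq_conjTranspose, Matrix.conjTranspose_apply]

lemma opNormR_transpose {n : ℕ} (M : Matrix (Fin n) (Fin n) ℝ) :
    opNormR Mᵀ = opNormR M := by
  unfold opNormR
  have h : toEuclideanCLM (𝕜 := ℝ) (n := Fin n) Mᵀ =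
      ContinuousLinearMap.adjoint (toEuclideanCLM (𝕜 := ℝ) (n := Fin n) M) := by
    rw [← ContinuousLinearMap.star_eq_adjoint, ← map_star]
    congr 1
  rw [h]
  exact (ContinuousLinearMap.adjoint (𝕜 := ℝ)
    (E := EuclideanSpace ℝ (Fin n)) (F := EuclideanSpace ℝ (Fin n))).norm_map _

lemma opNormR_neg {n : ℕ} (M : Matrix (Fin n) (Fin n) ℝ) :
    opNormR (-M) = opNormR M := by
  unfold opNormR
  rw [map_neg, norm_neg]

lemma cMat_apply' {n : ℕ} (M : Matrix (Fin n) (Fin n) ℝ) (v : EuclideanSpace ℂ (Fin n)) (i : Fin n) :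
    cMat M v i = ∑ j, (M i j : ℂ) * v j := rfl

lemma euclid_apply' {n : ℕ} (M : Matrix (Fin n) (Fin n) ℝ) (x : EuclideanSpace ℝ (Fin n)) (i : Fin n) :
    Matrix.toEuclideanCLM (𝕜 := ℝ) (n := Fin n) M x i = ∑ j, M i j * x j := rfl

lemma norm_sq_euclid {n : ℕ} (x : EuclideanSpace ℝ (Fin n)) : ‖x‖^2 = ∑ i, (x i)^2 := by
  rw [EuclideanSpace.norm_eq, Real.sq_sqrt (by positivity)]
  simp [sq_abs]

lemma norm_sq_euclidC {n : ℕ} (v : EuclideanSpace ℂ (Fin n)) :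
    ‖v‖^2 = ∑ i, ((v i).re^2 + (v i).im^2) := by
  rw [EuclideanSpace.norm_eq, Real.sq_sqrt (by positivity)]
  congr 1; ext i
  rw [Complex.sq_norm, Complex.normSq_apply]; ring

lemma cMat_norm_le {n : ℕ} (M : Matrix (Fin n) (Fin n) ℝ) (v : EuclideanSpace ℂ (Fin n)) :
    ‖cMat M v‖ ≤ opNormR M * ‖v‖ := by
  set T := Matrix.toEuclideanCLM (𝕜 := ℝ) (n := Fin n) M with hT
  set x : EuclideanSpace ℝ (Fin n) := WithLp.toLp 2 (fun i => (v i).re) with hx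
  set y : EuclideanSpace ℝ (Fin n) := WithLp.toLp 2 (fun i => (v i).im) with hy
  have hre : ∀ i, (cMat M v i).re = T x i := by
    intro i
    rw [cMat_apply', euclid_apply', Complex.re_sum]
    congr 1; ext j
    simp [Complex.re_ofReal_mul, hx]
  have him : ∀ i, (cMat M v i).im = T y i := by
    intro i
    rw [cMat_apply', euclid_apply', Complex.im_sum]
    congr 1; ext j
    simp [Complex.im_ofReal_mul, hy]
  have hL : ‖cMat M v‖^2 = ‖T x‖^2 + ‖T y‖^2 := by
    rw [norm_sq_euclidC, norm_sq_euclid, norm_sq_euclid, ← Finset.sum_add_distrib]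
    congr 1; ext i; rw [hre, him]
  have hv : ‖x‖^2 + ‖y‖^2 = ‖v‖^2 := by
    rw [norm_sq_euclidC, norm_sq_euclid, norm_sq_euclid, ← Finset.sum_add_distrib]
  have h1 : ‖T x‖ ≤ opNormR M * ‖x‖ := T.le_opNorm x
  have h2 : ‖T y‖ ≤ opNormR M * ‖y‖ := T.le_opNorm y
  have hN : (0:ℝ) ≤ opNormR M := norm_nonneg _
  have hsq : ‖cMat M v‖^2 ≤ (opNormR M * ‖v‖)^2 := by
    have h1' : ‖T x‖^2 ≤ opNormR M^2 * ‖x‖^2 := by nlinarith [norm_nonneg (T x), norm_nonneg x]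
    have h2' : ‖T y‖^2 ≤ opNormR M^2 * ‖y‖^2 := by nlinarith [norm_nonneg (T y), norm_nonneg y]
    rw [hL]
    nlinarith [h1', h2', hv]
  calc ‖cMat M v‖ = Real.sqrt (‖cMat M v‖^2) := (Real.sqrt_sq (norm_nonneg _)).symm
    _ ≤ Real.sqrt ((opNormR M * ‖v‖)^2) := Real.sqrt_le_sqrt hsq
    _ = opNormR M * ‖v‖ := Real.sqrt_sq (by positivity)

lemma inner_cMat_re {n : ℕ} (M : Matrix (Fin n) (Fin n) ℝ) (v : EuclideanSpace ℂ (Fin n)) :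
    (inner ℂ v (cMat M v) : ℂ).re =
      dotProduct (fun i => (v i).re) (M *ᵥ (fun i => (v i).re)) +
      dotProduct (fun i => (v i).im) (M *ᵥ (fun i => (v i).im)) := by
  simp only [PiLp.inner_apply, RCLike.inner_apply']
  rw [Complex.re_sum]
  calc ∑ i, (conj (v i) * cMat M v i).re
      = ∑ i, ∑ j, M i j * ((v i).re*(v j).re + (v i).im*(v j).im) := by
        refine Finset.sum_congr rfl fun i _ => ?_
        rw [cMat_apply', Finset.mul_sum, Complex.re_sum]
        refine Finset.sum_congr rfl fun j _ => ?_
        simp [Complex.mul_re, Complex.mul_im]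
        ring
    _ = (∑ i, ∑ j, M i j * ((v i).re*(v j).re)) + ∑ i, ∑ j, M i j * ((v i).im*(v j).im) := by
        rw [← Finset.sum_add_distrib]
        refine Finset.sum_congr rfl fun i _ => ?_
        rw [← Finset.sum_add_distrib]
        refine Finset.sum_congr rfl fun j _ => ?_
        ring
    _ = _ := by
        simp only [dotProduct, Matrix.mulVec, Finset.mul_sum]
        congr 1 <;> exact Finset.sum_congr rfl fun i _ => Finset.sum_congr rfl fun j _ => by ring

lemma inner_cMat_re_nonneg {n : ℕ} {M : Matrix (Fin n) (Fin n) ℝ} (hM : M.PosSemidef)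
    (v : EuclideanSpace ℂ (Fin n)) : 0 ≤ (inner ℂ v (cMat M v) : ℂ).re := by
  rw [inner_cMat_re]
  have h1 := hM.dotProduct_mulVec_nonneg (fun i => (v i).re)
  have h2 := hM.dotProduct_mulVec_nonneg (fun i => (v i).im)
  simp only [star_trivial] at h1 h2
  linarith

lemma young_key (ε C₀ ρ fv r β N s q : ℝ)
    (hε0 : 0 < ε) (hε1 : ε * (1+C₀^2) ≤ 1)
    (hρ : 0 ≤ ρ) (hfv : 0 < fv) (hr : 0 ≤ r) (hβ : 0 ≤ β)
    (hs : fv * r^2 - β^2 ≤ s) (hq : |q| ≤ 2*N*β*r)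
    (hNle : N ≤ C₀ * (Real.sqrt (1+ρ^2) * Real.sqrt fv)) :
    -2*β^2 + (ε*ρ/(1+ρ^2)) * (-(2*ρ*s + q)) +
      (ε*(ρ^2*fv/(1+ρ^2))) * ((3/2)*r^2) ≤ 0 := by
  have hden : (0:ℝ) < 1 + ρ^2 := by positivity
  set σ := Real.sqrt (1+ρ^2) with hσdef
  set τ := Real.sqrt fv with hτdef
  have hσ0 : 0 < σ := Real.sqrt_pos.mpr hden
  have hτ0 : 0 ≤ τ := Real.sqrt_nonneg _
  have hσ2 : σ^2 = 1 + ρ^2 := Real.sq_sqrt hden.le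
  have hτ2 : τ^2 = fv := Real.sq_sqrt hfv.le
  have hscaled : -2*β^2*(1+ρ^2) + (ε*ρ) * (-(2*ρ*s + q)) +
      (ε*(ρ^2*fv)) * ((3/2)*r^2) ≤ 0 := by
    have h1 : ε*ρ*(-q) ≤ ε*ρ*(2*N*β*r) := by
      refine mul_le_mul_of_nonneg_left ?_ (by positivity)
      exact le_trans (neg_le_abs q) hq
    have h2 : ε*ρ*(2*N*β*r) ≤ ε*ρ*(2*(C₀*σ*τ)*β*r) := by
      refine mul_le_mul_of_nonneg_left ?_ (by positivity)
      have := mul_le_mul_of_nonneg_right hNle (show (0:ℝ) ≤ 2*β*r by positivity)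
      linarith [this]
    have h3 : ε*ρ*(2*(C₀*σ*τ)*β*r) ≤ (ε/2)*(ρ^2*fv*r^2) + 2*ε*C₀^2*σ^2*β^2 := by
      rw [← hτ2]
      have hY := mul_nonneg hε0.le (sq_nonneg (ρ*τ*r - 2*C₀*σ*β))
      nlinarith [hY]
    have h4 : ε*ρ*(-(2*ρ*s)) ≤ -2*ε*ρ^2*(fv*r^2) + 2*ε*ρ^2*β^2 := by
      have := mul_le_mul_of_nonneg_left hs (show (0:ℝ) ≤ 2*ε*ρ^2 by positivity)
      linarith [this]
    have h5 : ρ^2 ≤ σ^2 := by rw [hσ2]; linarith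
    have hP1 : 2*ε*σ^2*β^2 + 2*ε*C₀^2*σ^2*β^2 ≤ 2*σ^2*β^2 := by
      have := mul_le_mul_of_nonneg_right hε1
        (show (0:ℝ) ≤ 2*σ^2*β^2 by positivity)
      linarith [this]
    have hP2 : 2*ε*ρ^2*β^2 ≤ 2*ε*σ^2*β^2 := by
      have := mul_le_mul_of_nonneg_right h5 (show (0:ℝ) ≤ 2*ε*β^2 by positivity)
      linarith [this]
    have hP3 : σ^2*β^2 = (1+ρ^2)*β^2 := by rw [hσ2]
    linarith [h1, h2, h3, h4, hP1, hP2, hP3]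
  have hmul : (-2*β^2 + (ε*ρ/(1+ρ^2)) * (-(2*ρ*s + q)) +
      (ε*(ρ^2*fv/(1+ρ^2))) * ((3/2)*r^2)) * (1+ρ^2) =
      -2*β^2*(1+ρ^2) + (ε*ρ) * (-(2*ρ*s + q)) + (ε*(ρ^2*fv)) * ((3/2)*r^2) := by
    field_simp
  by_contra hcon
  push_neg at hcon
  have := mul_pos hcon hden
  rw [hmul] at this
  linarith

-- im of inner ℂ with self-adjoint cMat
lemma inner_cMat_im_zero {n : ℕ} {M : Matrix (Fin n) (Fin n) ℝ} (hM : Mᵀ = M)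
    (v w : EuclideanSpace ℂ (Fin n)) :
    (inner ℂ v (cMat M v) : ℂ).im = 0 := by
  have hadj : ContinuousLinearMap.adjoint (cMat M) = cMat M := by rw [cMat_adjoint, hM]
  have h1 : (inner ℂ v (cMat M v) : ℂ) = conj (inner ℂ v (cMat M v) : ℂ) := by
    calc (inner ℂ v (cMat M v) : ℂ)
        = (inner ℂ v ((ContinuousLinearMap.adjoint (cMat M)) v) : ℂ) := by rw [hadj]
      _ = (inner ℂ (cMat M v) v : ℂ) := ContinuousLinearMap.adjoint_inner_right _ _ _
      _ = conj (inner ℂ v (cMat M v) : ℂ) := (inner_conj_symm _ _).symm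
  have h2 := congrArg Complex.im h1
  rw [Complex.conj_im] at h2
  linarith

lemma phi_deriv_val {n : ℕ} (Am Bm : Matrix (Fin n) (Fin n) ℝ) (hA : Amᵀ = Am)
    (ρ : ℝ) (v : EuclideanSpace ℂ (Fin n)) :
    (inner ℂ v (-(((Complex.I * (ρ:ℂ)) • cMat Am + cMat Bm) v)) +
     inner ℂ (-(((Complex.I * (ρ:ℂ)) • cMat Am + cMat Bm) v)) v : ℂ).re
     = -2 * (inner ℂ v (cMat Bm v) : ℂ).re := by
  set ℳ := (Complex.I * (ρ:ℂ)) • cMat Am + cMat Bm with hℳ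
  have hexp : (inner ℂ v (ℳ v) : ℂ)
      = (Complex.I * (ρ:ℂ)) * (inner ℂ v (cMat Am v) : ℂ) + (inner ℂ v (cMat Bm v) : ℂ) := by
    rw [hℳ]
    simp [ContinuousLinearMap.add_apply, ContinuousLinearMap.coe_smul', Pi.smul_apply,
      inner_add_right, inner_smul_right]
  have hconj : (inner ℂ (ℳ v) v : ℂ) = conj (inner ℂ v (ℳ v) : ℂ) := (inner_conj_symm _ _).symm
  rw [inner_neg_right, inner_neg_left, hconj, hexp]
  have him : (inner ℂ v (cMat Am v) : ℂ).im = 0 := inner_cMat_im_zero hA v v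
  simp only [Complex.neg_re, Complex.add_re, Complex.conj_re, Complex.mul_re, Complex.mul_im,
    Complex.I_re, Complex.I_im, Complex.ofReal_re, Complex.ofReal_im, him]
  ring

lemma symPart_transpose {n : ℕ} (M : Matrix (Fin n) (Fin n) ℝ) :
    (symPart M)ᵀ = symPart M := by
  unfold symPart
  rw [transpose_smul, transpose_add, transpose_transpose, add_comm]

lemma comm_eq {n : ℕ} (Am Km : Matrix (Fin n) (Fin n) ℝ) (hA : Amᵀ = Am) (hK : Kmᵀ = -Km) :
    Km * Am - Am * Km = (2:ℝ) • symPart (Km * Am) := by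
  unfold symPart
  rw [transpose_mul, hA, hK, Matrix.mul_neg, smul_smul]
  norm_num
  rw [sub_eq_add_neg]

lemma psi_deriv_val {n : ℕ} (Am Bm Km : Matrix (Fin n) (Fin n) ℝ)
    (hA : Amᵀ = Am) (hBsym : Bmᵀ = Bm) (hK : Kmᵀ = -Km)
    (ρ : ℝ) (v : EuclideanSpace ℂ (Fin n)) :
    (inner ℂ v (cMat Km (-(((Complex.I * (ρ:ℂ)) • cMat Am + cMat Bm) v))) +
     inner ℂ (-(((Complex.I * (ρ:ℂ)) • cMat Am + cMat Bm) v)) (cMat Km v) : ℂ).im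
    = -(2*ρ*(inner ℂ v (cMat (symPart (Km*Am)) v) : ℂ).re
        + ((inner ℂ v (cMat Km (cMat Bm v)) : ℂ) + (inner ℂ v (cMat Bm (cMat Km v)) : ℂ)).im) := by
  set ℳ := (Complex.I * (ρ:ℂ)) • cMat Am + cMat Bm with hℳ
  have hMadj : ContinuousLinearMap.adjoint ℳ = (-(Complex.I * (ρ:ℂ))) • cMat Am + cMat Bm := by
    rw [hℳ, ← ContinuousLinearMap.star_eq_adjoint, star_add, star_smul,
      ContinuousLinearMap.star_eq_adjoint, ContinuousLinearMap.star_eq_adjoint,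
      cMat_adjoint, cMat_adjoint, hA, hBsym]
    have hst : star (Complex.I * (ρ:ℂ)) = -(Complex.I * (ρ:ℂ)) := by simp [Complex.star_def]
    rw [hst, neg_smul, ← neg_smul]
  have hz : (inner ℂ v (cMat Km (cMat Am v)) : ℂ) - (inner ℂ v (cMat Am (cMat Km v)) : ℂ)
      = 2 * (inner ℂ v (cMat (symPart (Km*Am)) v) : ℂ) := by
    rw [← cMat_map_mul, ← cMat_map_mul, ← inner_sub_right, ← cMat_sub_apply,
      comm_eq Am Km hA hK, cMat_smul_apply, inner_smul_right]
    norm_num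
  have him : (inner ℂ v (cMat (symPart (Km*Am)) v) : ℂ).im = 0 :=
    inner_cMat_im_zero (symPart_transpose _) v v
  have hLHS : (inner ℂ v (cMat Km (-(ℳ v))) + inner ℂ (-(ℳ v)) (cMat Km v) : ℂ)
      = -((Complex.I * (ρ:ℂ)) * (2 * (inner ℂ v (cMat (symPart (Km*Am)) v) : ℂ))
          + ((inner ℂ v (cMat Km (cMat Bm v)) : ℂ) + (inner ℂ v (cMat Bm (cMat Km v)) : ℂ))) := by
    rw [map_neg, inner_neg_right, inner_neg_left,
      ← ContinuousLinearMap.adjoint_inner_right ℳ v (cMat Km v), hMadj]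
    have h1 : ℳ v = (Complex.I * (ρ:ℂ)) • (cMat Am v) + cMat Bm v := by
      rw [hℳ]; simp [ContinuousLinearMap.add_apply, ContinuousLinearMap.coe_smul', Pi.smul_apply]
    rw [h1]
    simp only [map_add, _root_.map_smul, ContinuousLinearMap.add_apply,
      ContinuousLinearMap.coe_smul', Pi.smul_apply, inner_add_right, inner_smul_right]
    rw [← hz]
    ring
  rw [hLHS]
  simp only [Complex.neg_im, Complex.add_im, Complex.mul_im, Complex.mul_re, Complex.I_re,
    Complex.I_im, Complex.ofReal_re, Complex.ofReal_im, him,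
    Complex.re_ofReal_mul, Complex.im_ofReal_mul]
  norm_num
  ring

theorem pointwise_energy_estimate_general (n : ℕ) (hn : 1 ≤ n)
    (C₀ : ℝ) (hC₀ : 0 < C₀) :
    ∃ C k : ℝ, 1 ≤ C ∧ 0 < k ∧
      ∀ (d : ℕ), 1 ≤ d →
      ∀ (A B K : (Fin d → ℝ) → Matrix (Fin n) (Fin n) ℝ)
        (f : (Fin d → ℝ) → ℝ)
        (hAsymm : ∀ ξ, ξ ≠ 0 → (A ξ).IsSymm)
        (hBpsd : ∀ ξ, ξ ≠ 0 → (B ξ).PosSemidef)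
        (hKskew : ∀ ξ, ξ ≠ 0 → (K ξ)ᵀ = -(K ξ))
        (hf : ∀ ξ, ξ ≠ 0 → 0 < f ξ)
        (hpos : ∀ ξ, ξ ≠ 0 → (symPart (K ξ * A ξ) + B ξ -
          f ξ • (1 : Matrix (Fin n) (Fin n) ℝ)).PosSemidef)
        (hK1 : ∀ ξ, ξ ≠ 0 → euclidNorm ξ * opNormR (K ξ) / (1 + euclidNorm ξ ^ 2) ≤ C₀)
        (hK2 : ∀ (ξ : Fin d → ℝ) (hξ : ξ ≠ 0),
          opNormR (K ξ * ((hBpsd ξ hξ).sqrt)) /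
            (Real.sqrt (1 + euclidNorm ξ ^ 2) * Real.sqrt (f ξ)) ≤ C₀)
        (ξ : Fin d → ℝ), ξ ≠ 0 →
        ∀ V : ℝ → EuclideanSpace ℂ (Fin n),
          (∀ t ∈ Set.Ici (0 : ℝ), HasDerivWithinAt V
            ((WithLp.equiv 2 (Fin n → ℂ)).symm
              (-(((Complex.I * (euclidNorm ξ : ℂ)) • (A ξ).map Complex.ofReal +
                  (B ξ).map Complex.ofReal) *ᵥ
                  (WithLp.equiv 2 (Fin n → ℂ) (V t)))))
            (Set.Ici (0 : ℝ)) t) →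
          ∀ t ∈ Set.Ici (0 : ℝ),
            ‖V t‖ ≤ C * Real.exp (-(k * euclidNorm ξ ^ 2 * f ξ * t / (1 + euclidNorm ξ ^ 2))) *
              ‖V 0‖ := by
  set ε : ℝ := min (1/(1+C₀^2)) (1/(2*C₀)) with hεdef
  have hε0 : 0 < ε := lt_min (by positivity) (by positivity)
  have hε1 : ε * (1 + C₀^2) ≤ 1 := by
    have h := min_le_left (1/(1+C₀^2)) (1/(2*C₀))
    have hp : (0:ℝ) < 1 + C₀^2 := by positivity
    calc ε * (1+C₀^2) ≤ (1/(1+C₀^2)) * (1+C₀^2) := mul_le_mul_of_nonneg_right h hp.le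
      _ = 1 := by field_simp
  have hε2 : ε * C₀ ≤ 1/2 := by
    have h := min_le_right (1/(1+C₀^2)) (1/(2*C₀))
    calc ε * C₀ ≤ (1/(2*C₀)) * C₀ := mul_le_mul_of_nonneg_right h hC₀.le
      _ = 1/2 := by field_simp
  refine ⟨2, ε/2, by norm_num, by positivity, ?_⟩
  intro d hd A B K f hAsymm hBpsd hKskew hf hpos hK1 hK2 ξ hξ V hV
  have hfξ : 0 < f ξ := hf ξ hξ
  set ρ : ℝ := euclidNorm ξ with hρdef
  have hρ0 : 0 ≤ ρ := Real.sqrt_nonneg _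
  have hden : (0:ℝ) < 1 + ρ^2 := by positivity
  set R : Matrix (Fin n) (Fin n) ℝ := (hBpsd ξ hξ).sqrt with hRdef
  have hRR : R * R = B ξ := psd_sqrt_mul_self (hBpsd ξ hξ)
  have hRpsd : R.PosSemidef := psd_sqrt_psd (hBpsd ξ hξ)
  have hRsym : Rᵀ = R := hRpsd.1
  have hBsym : (B ξ)ᵀ = B ξ := (hBpsd ξ hξ).1
  have hAsym : (A ξ)ᵀ = A ξ := hAsymm ξ hξ
  set c : ℝ := ε * ρ / (1 + ρ^2) with hcdef
  have hc0 : 0 ≤ c := by positivity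
  set G : ℝ := ρ^2 * f ξ / (1 + ρ^2) with hGdef
  have hG0 : 0 ≤ G := by positivity
  set θ : ℝ := ε * G with hθdef
  have hθ0 : 0 ≤ θ := by positivity
  set ℳ : EuclideanSpace ℂ (Fin n) →L[ℂ] EuclideanSpace ℂ (Fin n) :=
    (Complex.I * (ρ:ℂ)) • cMat (A ξ) + cMat (B ξ) with hℳdef
  -- the ODE in CLM form
  have hV' : ∀ t ∈ Set.Ici (0:ℝ), HasDerivWithinAt V (-(ℳ (V t))) (Set.Ici 0) t := by
    intro t ht
    have h := hV t ht
    have hmv : (((Complex.I * (ρ : ℂ)) • (A ξ).map Complex.ofReal +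
          (B ξ).map Complex.ofReal) *ᵥ (WithLp.equiv 2 (Fin n → ℂ) (V t)))
        = WithLp.equiv 2 (Fin n → ℂ) (ℳ (V t)) := by
      rw [Matrix.add_mulVec, Matrix.smul_mulVec]
      rfl
    rw [hmv] at h
    exact h
  -- scalar quantities
  set Φ : ℝ → ℝ := fun u => ‖V u‖^2 with hΦdef
  set Ψ : ℝ → ℝ := fun u => (inner ℂ (V u) (cMat (K ξ) (V u)) : ℂ).im with hΨdef
  set bf : ℝ → ℝ := fun u => (inner ℂ (V u) (cMat (B ξ) (V u)) : ℂ).re with hbdef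
  set sf : ℝ → ℝ := fun u => (inner ℂ (V u) (cMat (symPart (K ξ * A ξ)) (V u)) : ℂ).re with hsdef
  set qf : ℝ → ℝ := fun u => ((inner ℂ (V u) (cMat (K ξ) (cMat (B ξ) (V u))) : ℂ) +
      (inner ℂ (V u) (cMat (B ξ) (cMat (K ξ) (V u))) : ℂ)).im with hqdef
  set Efun : ℝ → ℝ := fun u => Φ u + c * Ψ u with hEdef
  -- norm squared as re of inner
  have hnormsq : ∀ w : EuclideanSpace ℂ (Fin n), (inner ℂ w w : ℂ).re = ‖w‖^2 := by
    intro w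
    exact inner_self_eq_norm_sq (𝕜 := ℂ) w
  -- derivative of Φ
  have hΦ' : ∀ t ∈ Set.Ici (0:ℝ), HasDerivWithinAt Φ (-2 * bf t) (Set.Ici 0) t := by
    intro t ht
    have h1 := HasDerivWithinAt.inner ℂ (hV' t ht) (hV' t ht)
    have h2 := Complex.reCLM.hasFDerivAt.comp_hasDerivWithinAt t h1
    have hfn : (⇑Complex.reCLM ∘ fun u => (inner ℂ (V u) (V u) : ℂ)) = Φ := by
      funext u
      simp only [Function.comp_apply, Complex.reCLM_apply, hΦdef]
      exact hnormsq (V u)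
    rw [hfn] at h2
    refine h2.congr_deriv (Eq.symm ?_)
    have hval := phi_deriv_val (A ξ) (B ξ) hAsym ρ (V t)
    simp only [Complex.reCLM_apply]
    rw [← hℳdef] at hval
    rw [hval]
  -- derivative of Ψ
  have hΨ' : ∀ t ∈ Set.Ici (0:ℝ), HasDerivWithinAt Ψ (-(2*ρ*sf t + qf t)) (Set.Ici 0) t := by
    intro t ht
    have h0 : HasDerivWithinAt (fun u => cMat (K ξ) (V u)) (cMat (K ξ) (-(ℳ (V t))))
        (Set.Ici 0) t :=
      ((cMat (K ξ)).restrictScalars ℝ).hasFDerivAt.comp_hasDerivWithinAt t (hV' t ht)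
    have h1 := HasDerivWithinAt.inner ℂ (hV' t ht) h0
    have h2 := Complex.imCLM.hasFDerivAt.comp_hasDerivWithinAt t h1
    have hfn : (⇑Complex.imCLM ∘ fun u => (inner ℂ (V u) (cMat (K ξ) (V u)) : ℂ)) = Ψ := by
      funext u
      simp only [Function.comp_apply, Complex.imCLM_apply, hΨdef]
    rw [hfn] at h2
    refine h2.congr_deriv (Eq.symm ?_)
    have hval := psi_deriv_val (A ξ) (B ξ) (K ξ) hAsym hBsym (hKskew ξ hξ) ρ (V t)
    rw [← hℳdef] at hval
    simp only [Complex.imCLM_apply]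
    rw [hval]
  -- derivative of Efun
  have hE' : ∀ t ∈ Set.Ici (0:ℝ), HasDerivWithinAt Efun
      (-2 * bf t + c * (-(2*ρ*sf t + qf t))) (Set.Ici 0) t := by
    intro t ht
    exact (hΦ' t ht).add ((hΨ' t ht).const_mul c)
  -- static identities and bounds
  have hRadj : ContinuousLinearMap.adjoint (cMat R) = cMat R := by
    rw [cMat_adjoint, hRsym]
  have hb : ∀ t : ℝ, bf t = ‖cMat R (V t)‖^2 := by
    intro t
    have h1 : cMat (B ξ) (V t) = cMat R (cMat R (V t)) := by rw [← cMat_map_mul, hRR]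
    show (inner ℂ (V t) (cMat (B ξ) (V t)) : ℂ).re = _
    rw [h1, ← hRadj, ContinuousLinearMap.adjoint_inner_right, hRadj]
    exact hnormsq (cMat R (V t))
  have hs_lb : ∀ t : ℝ, f ξ * ‖V t‖^2 - bf t ≤ sf t := by
    intro t
    have h0 := inner_cMat_re_nonneg (hpos ξ hξ) (V t)
    have h1 : cMat (symPart (K ξ * A ξ) + B ξ - f ξ • 1) (V t)
        = cMat (symPart (K ξ * A ξ)) (V t) + cMat (B ξ) (V t) - (f ξ : ℂ) • (V t) := by
      rw [cMat_sub_apply, cMat_add_apply, cMat_smul_one_apply]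
    rw [h1, inner_sub_right, inner_add_right, inner_smul_right] at h0
    simp only [Complex.sub_re, Complex.add_re, Complex.re_ofReal_mul] at h0
    have h2 := hnormsq (V t)
    rw [h2] at h0
    show f ξ * ‖V t‖^2 - (inner ℂ (V t) (cMat (B ξ) (V t)) : ℂ).re ≤
      (inner ℂ (V t) (cMat (symPart (K ξ * A ξ)) (V t)) : ℂ).re
    linarith
  have hNkr : opNormR (K ξ * R) ≤ C₀ * (Real.sqrt (1+ρ^2) * Real.sqrt (f ξ)) := by
    have h := hK2 ξ hξ
    have hdpos : 0 < Real.sqrt (1+ρ^2) * Real.sqrt (f ξ) := by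
      apply mul_pos (Real.sqrt_pos.mpr hden) (Real.sqrt_pos.mpr hfξ)
    rw [div_le_iff₀ hdpos] at h
    exact h
  have hRK : opNormR (R * K ξ) = opNormR (K ξ * R) := by
    have h1 : (R * K ξ)ᵀ = -(K ξ * R) := by
      rw [transpose_mul, hKskew ξ hξ, hRsym, Matrix.neg_mul]
    calc opNormR (R * K ξ) = opNormR ((R * K ξ)ᵀ) := (opNormR_transpose _).symm
      _ = opNormR (-(K ξ * R)) := by rw [h1]
      _ = opNormR (K ξ * R) := opNormR_neg _
  have hq_bound : ∀ t : ℝ, |qf t| ≤ 2 * opNormR (K ξ * R) * ‖cMat R (V t)‖ * ‖V t‖ := by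
    intro t
    have h1 : cMat (K ξ) (cMat (B ξ) (V t)) = cMat (K ξ * R) (cMat R (V t)) := by
      rw [← hRR, cMat_map_mul R R, cMat_map_mul (K ξ) R]
    have h2 : cMat (B ξ) (cMat (K ξ) (V t)) = cMat R (cMat (R * K ξ) (V t)) := by
      rw [← hRR, cMat_map_mul R R, cMat_map_mul R (K ξ)]
    have hz3 : (inner ℂ (V t) (cMat (K ξ) (cMat (B ξ) (V t))) : ℂ)
        = inner ℂ (cMat ((K ξ * R)ᵀ) (V t)) (cMat R (V t)) := by
      rw [h1, ← cMat_adjoint]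
      exact (ContinuousLinearMap.adjoint_inner_left _ (cMat R (V t)) (V t)).symm
    have hz4 : (inner ℂ (V t) (cMat (B ξ) (cMat (K ξ) (V t))) : ℂ)
        = inner ℂ (cMat R (V t)) (cMat (R * K ξ) (V t)) := by
      have h3 := ContinuousLinearMap.adjoint_inner_right (cMat R) (V t)
        (cMat (R * K ξ) (V t))
      rw [hRadj] at h3
      rw [h2, h3]
    have hz3n : ‖(inner ℂ (V t) (cMat (K ξ) (cMat (B ξ) (V t))) : ℂ)‖
        ≤ opNormR (K ξ * R) * ‖V t‖ * ‖cMat R (V t)‖ := by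
      rw [hz3]
      calc ‖(inner ℂ (cMat ((K ξ * R)ᵀ) (V t)) (cMat R (V t)) : ℂ)‖
          ≤ ‖cMat ((K ξ * R)ᵀ) (V t)‖ * ‖cMat R (V t)‖ := norm_inner_le_norm _ _
        _ ≤ (opNormR ((K ξ * R)ᵀ) * ‖V t‖) * ‖cMat R (V t)‖ :=
            mul_le_mul_of_nonneg_right (cMat_norm_le _ _) (norm_nonneg _)
        _ = opNormR (K ξ * R) * ‖V t‖ * ‖cMat R (V t)‖ := by rw [opNormR_transpose]
    have hz4n : ‖(inner ℂ (V t) (cMat (B ξ) (cMat (K ξ) (V t))) : ℂ)‖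
        ≤ ‖cMat R (V t)‖ * (opNormR (K ξ * R) * ‖V t‖) := by
      rw [hz4]
      calc ‖(inner ℂ (cMat R (V t)) (cMat (R * K ξ) (V t)) : ℂ)‖
          ≤ ‖cMat R (V t)‖ * ‖cMat (R * K ξ) (V t)‖ := norm_inner_le_norm _ _
        _ ≤ ‖cMat R (V t)‖ * (opNormR (R * K ξ) * ‖V t‖) :=
            mul_le_mul_of_nonneg_left (cMat_norm_le _ _) (norm_nonneg _)
        _ = ‖cMat R (V t)‖ * (opNormR (K ξ * R) * ‖V t‖) := by rw [hRK]
    show |((inner ℂ (V t) (cMat (K ξ) (cMat (B ξ) (V t))) : ℂ) +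
      (inner ℂ (V t) (cMat (B ξ) (cMat (K ξ) (V t))) : ℂ)).im| ≤ _
    calc |((inner ℂ (V t) (cMat (K ξ) (cMat (B ξ) (V t))) : ℂ) +
          (inner ℂ (V t) (cMat (B ξ) (cMat (K ξ) (V t))) : ℂ)).im|
        ≤ ‖(inner ℂ (V t) (cMat (K ξ) (cMat (B ξ) (V t))) : ℂ) +
          (inner ℂ (V t) (cMat (B ξ) (cMat (K ξ) (V t))) : ℂ)‖ := by
          exact Complex.abs_im_le_norm _
      _ ≤ ‖(inner ℂ (V t) (cMat (K ξ) (cMat (B ξ) (V t))) : ℂ)‖ +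
          ‖(inner ℂ (V t) (cMat (B ξ) (cMat (K ξ) (V t))) : ℂ)‖ := norm_add_le _ _
      _ ≤ 2 * opNormR (K ξ * R) * ‖cMat R (V t)‖ * ‖V t‖ := by linarith [hz3n, hz4n]
  -- bound on Ψ
  have hΨb : ∀ t : ℝ, |Ψ t| ≤ opNormR (K ξ) * ‖V t‖^2 := by
    intro t
    show |(inner ℂ (V t) (cMat (K ξ) (V t)) : ℂ).im| ≤ _
    calc |(inner ℂ (V t) (cMat (K ξ) (V t)) : ℂ).im|
        ≤ ‖(inner ℂ (V t) (cMat (K ξ) (V t)) : ℂ)‖ := by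
          exact Complex.abs_im_le_norm _
      _ ≤ ‖V t‖ * ‖cMat (K ξ) (V t)‖ := norm_inner_le_norm _ _
      _ ≤ ‖V t‖ * (opNormR (K ξ) * ‖V t‖) :=
          mul_le_mul_of_nonneg_left (cMat_norm_le _ _) (norm_nonneg _)
      _ = opNormR (K ξ) * ‖V t‖^2 := by ring
  have hcK : c * opNormR (K ξ) ≤ 1/2 := by
    have h1 : c * opNormR (K ξ) = ε * (ρ * opNormR (K ξ) / (1+ρ^2)) := by
      rw [hcdef]; ring
    rw [h1]
    calc ε * (ρ * opNormR (K ξ) / (1+ρ^2)) ≤ ε * C₀ :=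
        mul_le_mul_of_nonneg_left (hK1 ξ hξ) hε0.le
      _ ≤ 1/2 := hε2
  have hcomp : ∀ t : ℝ, (1/2) * ‖V t‖^2 ≤ Efun t ∧ Efun t ≤ (3/2) * ‖V t‖^2 := by
    intro t
    have h1 : |c * Ψ t| ≤ (1/2) * ‖V t‖^2 := by
      rw [abs_mul, abs_of_nonneg hc0]
      calc c * |Ψ t| ≤ c * (opNormR (K ξ) * ‖V t‖^2) :=
          mul_le_mul_of_nonneg_left (hΨb t) hc0
        _ = (c * opNormR (K ξ)) * ‖V t‖^2 := by ring
        _ ≤ (1/2) * ‖V t‖^2 := mul_le_mul_of_nonneg_right hcK (sq_nonneg _)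
    have h2 := abs_le.mp h1
    constructor
    · simp only [hEdef, hΦdef]
      linarith [h2.1]
    · simp only [hEdef, hΦdef]
      linarith [h2.2]
  -- the key differential inequality
  have hkey : ∀ t : ℝ, (-2 * bf t + c * (-(2*ρ*sf t + qf t))) + θ * Efun t ≤ 0 := by
    intro t
    have hyoung := young_key ε C₀ ρ (f ξ) (‖V t‖) (‖cMat R (V t)‖) (opNormR (K ξ * R))
      (sf t) (qf t) hε0 hε1 hρ0 hfξ (norm_nonneg _) (norm_nonneg _)
      (by rw [← hb t]; exact hs_lb t) (hq_bound t) hNkr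
    have h3 : θ * Efun t ≤ θ * ((3/2) * ‖V t‖^2) :=
      mul_le_mul_of_nonneg_left (hcomp t).2 hθ0
    have h6 : bf t = ‖cMat R (V t)‖^2 := hb t
    clear_value c G θ
    rw [hθdef, hGdef] at h3
    rw [hcdef, hθdef, hGdef]
    linarith [hyoung, h3, h6]
  -- Gronwall argument
  set Ffun : ℝ → ℝ := fun u => Efun u * Real.exp (θ*u) with hFdef
  have hexp : ∀ u : ℝ, HasDerivAt (fun s : ℝ => Real.exp (θ*s)) (Real.exp (θ*u)*θ) u := by
    intro u
    have h1 : HasDerivAt (fun s : ℝ => θ*s) θ u := by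
      simpa using (hasDerivAt_id u).const_mul θ
    exact (Real.hasDerivAt_exp (θ*u)).comp u h1
  have hFcont : ContinuousOn Ffun (Set.Ici 0) := by
    intro u hu
    exact ((hE' u hu).continuousWithinAt).mul ((hexp u).continuousAt.continuousWithinAt)
  have hFderiv : ∀ u ∈ interior (Set.Ici (0:ℝ)),
      HasDerivAt Ffun ((-2 * bf u + c * (-(2*ρ*sf u + qf u))) * Real.exp (θ*u)
        + Efun u * (Real.exp (θ*u)*θ)) u := by
    intro u hu
    rw [interior_Ici, Set.mem_Ioi] at hu
    have h1 := (hE' u (le_of_lt hu)).hasDerivAt (Ici_mem_nhds hu)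
    exact h1.mul (hexp u)
  have hanti : AntitoneOn Ffun (Set.Ici 0) := by
    apply antitoneOn_of_deriv_nonpos (convex_Ici 0) hFcont
    · intro u hu
      exact (hFderiv u hu).differentiableAt.differentiableWithinAt
    · intro u hu
      rw [(hFderiv u hu).deriv]
      have hk := hkey u
      have he : (0:ℝ) < Real.exp (θ*u) := Real.exp_pos _
      have heq : (-2 * bf u + c * (-(2*ρ*sf u + qf u))) * Real.exp (θ*u)
          + Efun u * (Real.exp (θ*u)*θ)
          = ((-2 * bf u + c * (-(2*ρ*sf u + qf u))) + θ * Efun u) * Real.exp (θ*u) := by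
        ring
      rw [heq]
      exact mul_nonpos_iff.mpr (Or.inr ⟨hk, he.le⟩)
  -- conclusion
  intro t ht
  have hmono : Ffun t ≤ Ffun 0 := hanti Set.self_mem_Ici ht ht
  have hF0 : Ffun 0 = Efun 0 := by
    simp only [hFdef, mul_zero, Real.exp_zero, mul_one]
  have hΦte : ‖V t‖^2 * Real.exp (θ*t) ≤ 3 * ‖V 0‖^2 := by
    have h1 : Efun t * Real.exp (θ*t) ≤ Efun 0 := by rw [← hF0]; exact hmono
    have h2 := mul_le_mul_of_nonneg_right (hcomp t).1 (Real.exp_pos (θ*t)).le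
    have h3 := (hcomp 0).2
    clear_value Efun θ Ffun
    linarith [h1, h2, h3]
  have hΦt : ‖V t‖^2 ≤ 3 * ‖V 0‖^2 * Real.exp (-(θ*t)) := by
    have hepos := Real.exp_pos (θ*t)
    rw [Real.exp_neg, ← div_eq_mul_inv, le_div_iff₀ hepos]
    exact hΦte
  have hexp2 : Real.exp (-(θ/2)*t)^2 = Real.exp (-(θ*t)) := by
    rw [sq, ← Real.exp_add]
    congr 1
    ring
  have hsqle : ‖V t‖^2 ≤ (2 * Real.exp (-(θ/2)*t) * ‖V 0‖)^2 := by
    have h1 : (2 * Real.exp (-(θ/2)*t) * ‖V 0‖)^2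
        = 4 * Real.exp (-(θ*t)) * ‖V 0‖^2 := by
      rw [mul_pow, mul_pow, hexp2]; ring
    rw [h1]
    nlinarith [hΦt, Real.exp_pos (-(θ*t)), sq_nonneg (‖V 0‖)]
  have hfin : ‖V t‖ ≤ 2 * Real.exp (-(θ/2)*t) * ‖V 0‖ := by
    have h2 : (0:ℝ) ≤ 2 * Real.exp (-(θ/2)*t) * ‖V 0‖ := by positivity
    calc ‖V t‖ = Real.sqrt (‖V t‖^2) := (Real.sqrt_sq (norm_nonneg _)).symm
      _ ≤ Real.sqrt ((2 * Real.exp (-(θ/2)*t) * ‖V 0‖)^2) := Real.sqrt_le_sqrt hsqle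
      _ = 2 * Real.exp (-(θ/2)*t) * ‖V 0‖ := Real.sqrt_sq h2
  have hexpeq : -(θ/2)*t = -(ε/2 * ρ^2 * f ξ * t / (1+ρ^2)) := by
    rw [hθdef, hGdef]
    ring
  rw [hexpeq] at hfin
  exact hfin
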